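/- Let 0 < α < 1, λ ≥ 1, and let h : [a,b] → [0,∞) be continuous. If u : [a,b] → [0,∞) is continuous and satisfies u(t) ≤ (1/Γ(α)) ∫_a^t (t-s)^{α-1} h(s)·u(s)^λ ds for every t ∈ [a,b], then u(t) = 0 for every t ∈ [a,b]. Consequently, w(t,s) := h(t)·s^λ is a Kamke function of order α on [a,b]. -/

import Mathlib

open MeasureTheory Set intervalIntegral

/-- `w : [a,b] × [0,∞) → [0,∞)` is a Kamke function of order `α` on `[a,b]`. -/
def IsKamkeFunction (α a b : ℝ) (w : ℝ → ℝ → ℝ) : Prop :=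
  ContinuousOn (fun p : ℝ × ℝ => w p.1 p.2) (Set.Icc a b ×ˢ Set.Ici 0) ∧
  (∀ t ∈ Set.Icc a b, ∀ s : ℝ, 0 ≤ s → 0 ≤ w t s) ∧
  (∀ t ∈ Set.Icc a b, w t 0 = 0) ∧
  (∀ v : ℝ → ℝ, ContinuousOn v (Set.Icc a b) → (∀ t ∈ Set.Icc a b, 0 ≤ v t) →
    (∀ t ∈ Set.Icc a b,
      v t ≤ (Real.Gamma α)⁻¹ * ∫ s in a..t, ((t - s) ^ (α - 1) : ℝ) * w s (v s)) →
    Filter.Tendsto (fun t => v t / (t - a) ^ α) (nhdsWithin a (Set.Ioi a)) (nhds 0) →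
    ∀ t ∈ Set.Icc a b, v t = 0)

/-- The singular kernel `s ↦ (t-s)^(α-1)` is interval integrable for `α > 0`. -/
private lemma kernel_integrable {α : ℝ} (hα : 0 < α) (t p q : ℝ) :
    IntervalIntegrable (fun s => (t - s) ^ (α - 1)) volume p q := by
  have h := intervalIntegral.intervalIntegrable_rpow' (a := t - p) (b := t - q)
    (show (-1 : ℝ) < α - 1 by linarith)
  simpa using h.comp_sub_left t

/-- `∫_c^t (t-s)^(α-1) ds = (t-c)^α / α` for `c ≤ t`, `0 < α`. -/
private lemma kernel_integral {α : ℝ} (hα : 0 < α) {c t : ℝ} (hct : c ≤ t) :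
    (∫ s in c..t, (t - s) ^ (α - 1)) = (t - c) ^ α / α := by
  have := intervalIntegral.integral_comp_sub_left (a := c) (b := t)
    (fun x => x ^ (α - 1)) t
  rw [this, sub_self, integral_rpow (Or.inl (by linarith))]
  rw [Real.zero_rpow (by linarith : α - 1 + 1 ≠ 0)]
  rw [show α - 1 + 1 = α by ring]
  ring

/-- Main vanishing lemma. -/
private lemma vanish (a b α lam : ℝ) (hab : a < b) (hα0 : 0 < α) (hα1 : α < 1)
    (hlam : 1 ≤ lam)
    (h : ℝ → ℝ) (hh : ContinuousOn h (Set.Icc a b)) (hh0 : ∀ t ∈ Set.Icc a b, 0 ≤ h t)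
    (u : ℝ → ℝ) (hu : ContinuousOn u (Set.Icc a b)) (hu0 : ∀ t ∈ Set.Icc a b, 0 ≤ u t)
    (hineq : ∀ t ∈ Set.Icc a b,
      u t ≤ (Real.Gamma α)⁻¹ * ∫ s in a..t, ((t - s) ^ (α - 1) : ℝ) * (h s * u s ^ lam)) :
    ∀ t ∈ Set.Icc a b, u t = 0 := by
  have hΓ : 0 < Real.Gamma α := Real.Gamma_pos_of_pos hα0
  have hlam0 : lam ≠ 0 := by linarith
  obtain ⟨K, hK⟩ := isCompact_Icc.exists_bound_of_continuousOn hu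
  obtain ⟨H, hH⟩ := isCompact_Icc.exists_bound_of_continuousOn hh
  have hKb : ∀ s ∈ Set.Icc a b, u s ≤ K := fun s hs =>
    (le_abs_self _).trans (by simpa [Real.norm_eq_abs] using hK s hs)
  have hHb : ∀ s ∈ Set.Icc a b, h s ≤ H := fun s hs =>
    (le_abs_self _).trans (by simpa [Real.norm_eq_abs] using hH s hs)
  have hK0 : 0 ≤ K := le_trans (norm_nonneg _) (hK a ⟨le_refl a, hab.le⟩)
  have hH0 : 0 ≤ H := le_trans (norm_nonneg _) (hH a ⟨le_refl a, hab.le⟩)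
  set C : ℝ := H * K ^ (lam - 1) with hC
  have hC0 : 0 ≤ C := mul_nonneg hH0 (Real.rpow_nonneg hK0 _)
  set ε : ℝ := α * Real.Gamma α / (2 * (C + 1)) with hε
  have hε0 : 0 < ε := by positivity
  set δ : ℝ := ε ^ (α⁻¹ : ℝ) with hδdef
  have hδ0 : 0 < δ := Real.rpow_pos_of_pos hε0 _
  have hδα : δ ^ α = ε := Real.rpow_inv_rpow hε0.le hα0.ne'
  have hkey : (Real.Gamma α)⁻¹ * (C * (δ ^ α / α)) ≤ 1 / 2 := by
    rw [hδα]
    have h1 : (Real.Gamma α)⁻¹ * (C * (ε / α)) = C / (2 * (C + 1)) := by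
      rw [hε]; field_simp
    rw [h1, div_le_div_iff₀ (by positivity) (by norm_num)]
    linarith
  -- the continuous integrand factor
  have hgcont : ContinuousOn (fun s => h s * u s ^ lam) (Set.Icc a b) := by
    exact hh.mul (((Real.continuous_rpow_const (by linarith)).comp_continuousOn hu))
  -- one step of the continuation argument
  have step : ∀ c, a ≤ c → c < b → (∀ s ∈ Set.Icc a c, u s = 0) →
      ∀ t ∈ Set.Icc a (min (c + δ) b), u t = 0 := by
    intro c hac hcb hzero
    set d := min (c + δ) b with hd
    have hcd : c < d := lt_min (by linarith) hcb
    have hdb : d ≤ b := min_le_right _ _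
    have hdδ : d - c ≤ δ := by
      have : d ≤ c + δ := min_le_left _ _
      linarith
    set S := sSup (u '' Set.Icc c d) with hS
    have hmemc : u c ∈ u '' Set.Icc c d := mem_image_of_mem _ ⟨le_refl c, hcd.le⟩
    have hne : (u '' Set.Icc c d).Nonempty := ⟨u c, hmemc⟩
    have hbdd : BddAbove (u '' Set.Icc c d) := by
      refine ⟨K, ?_⟩
      rintro y ⟨s, hs, rfl⟩
      exact hKb s ⟨hac.trans hs.1, hs.2.trans hdb⟩
    have hS0 : 0 ≤ S := le_trans (hu0 c ⟨hac, hcb.le⟩) (le_csSup hbdd hmemc)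
    have hhalf : ∀ t ∈ Set.Icc c d, u t ≤ S / 2 := by
      intro t ht
      have htab : t ∈ Set.Icc a b := ⟨hac.trans ht.1, ht.2.trans hdb⟩
      have htb : t ≤ b := ht.2.trans hdb
      have I1 : IntervalIntegrable
          (fun s => (t - s) ^ (α - 1) * (h s * u s ^ lam)) volume a c :=
        (kernel_integrable hα0 t a c).mul_continuousOn
          (hgcont.mono (by
            rw [Set.uIcc_of_le hac]
            exact Set.Icc_subset_Icc le_rfl (hcb.le)))
      have I2 : IntervalIntegrable
          (fun s => (t - s) ^ (α - 1) * (h s * u s ^ lam)) volume c t :=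
        (kernel_integrable hα0 t c t).mul_continuousOn
          (hgcont.mono (by
            rw [Set.uIcc_of_le ht.1]
            exact Set.Icc_subset_Icc hac htb))
      have I3 : IntervalIntegrable
          (fun s => (t - s) ^ (α - 1) * (C * S)) volume c t :=
        (kernel_integrable hα0 t c t).mul_const _
      have hzero1 : (∫ s in a..c, (t - s) ^ (α - 1) * (h s * u s ^ lam)) = 0 := by
        have heq : Set.EqOn (fun s => (t - s) ^ (α - 1) * (h s * u s ^ lam))
            (fun _ => (0 : ℝ)) (Set.uIcc a c) := by
          intro s hs
          rw [Set.uIcc_of_le hac] at hs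
          simp [hzero s hs, Real.zero_rpow hlam0]
        rw [intervalIntegral.integral_congr heq, intervalIntegral.integral_zero]
      have hmono : (∫ s in c..t, (t - s) ^ (α - 1) * (h s * u s ^ lam))
          ≤ ∫ s in c..t, (t - s) ^ (α - 1) * (C * S) := by
        apply intervalIntegral.integral_mono_on ht.1 I2 I3
        intro s hs
        have hsab : s ∈ Set.Icc a b := ⟨hac.trans hs.1, hs.2.trans htb⟩
        have hker : 0 ≤ (t - s) ^ (α - 1) :=
          Real.rpow_nonneg (by linarith [hs.2]) _
        apply mul_le_mul_of_nonneg_left ?_ hker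
        have husS : u s ≤ S :=
          le_csSup hbdd (mem_image_of_mem _ ⟨hs.1, hs.2.trans ht.2⟩)
        have hupow : u s ^ lam ≤ K ^ (lam - 1) * u s := by
          rcases eq_or_lt_of_le (hu0 s hsab) with h0 | h0
          · rw [← h0, Real.zero_rpow hlam0, mul_zero]
          · have e : u s ^ lam = u s ^ (lam - 1) * u s := by
              rw [← Real.rpow_add_one h0.ne' (lam - 1), sub_add_cancel]
            rw [e]
            exact mul_le_mul_of_nonneg_right
              (Real.rpow_le_rpow (hu0 s hsab) (hKb s hsab) (by linarith))
              (hu0 s hsab)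
        calc h s * u s ^ lam ≤ H * (K ^ (lam - 1) * u s) :=
              mul_le_mul (hHb s hsab) hupow (Real.rpow_nonneg (hu0 s hsab) _) hH0
          _ = C * u s := by rw [hC]; ring
          _ ≤ C * S := mul_le_mul_of_nonneg_left husS hC0
      have hcomp : (∫ s in c..t, (t - s) ^ (α - 1) * (C * S))
          = C * S * ((t - c) ^ α / α) := by
        rw [intervalIntegral.integral_mul_const, kernel_integral hα0 ht.1]
        ring
      have hsplit : (∫ s in a..t, (t - s) ^ (α - 1) * (h s * u s ^ lam))
          = (∫ s in a..c, (t - s) ^ (α - 1) * (h s * u s ^ lam))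
            + ∫ s in c..t, (t - s) ^ (α - 1) * (h s * u s ^ lam) :=
        (intervalIntegral.integral_add_adjacent_intervals I1 I2).symm
      have hpow : (t - c) ^ α ≤ δ ^ α :=
        Real.rpow_le_rpow (by linarith [ht.1]) (by linarith [ht.2, hdδ]) hα0.le
      calc u t ≤ (Real.Gamma α)⁻¹
            * ∫ s in a..t, (t - s) ^ (α - 1) * (h s * u s ^ lam) := hineq t htab
        _ = (Real.Gamma α)⁻¹
            * ∫ s in c..t, (t - s) ^ (α - 1) * (h s * u s ^ lam) := by
            rw [hsplit, hzero1, zero_add]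
        _ ≤ (Real.Gamma α)⁻¹ * (C * S * ((t - c) ^ α / α)) := by
            rw [← hcomp]
            exact mul_le_mul_of_nonneg_left hmono (by positivity)
        _ ≤ (Real.Gamma α)⁻¹ * (C * S * (δ ^ α / α)) := by
            apply mul_le_mul_of_nonneg_left _ (by positivity)
            apply mul_le_mul_of_nonneg_left _ (by positivity)
            gcongr
        _ = S * ((Real.Gamma α)⁻¹ * (C * (δ ^ α / α))) := by ring
        _ ≤ S * (1 / 2) := mul_le_mul_of_nonneg_left hkey hS0
        _ = S / 2 := by ring
    have hShalf : S ≤ S / 2 := by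
      apply csSup_le hne
      rintro y ⟨t, ht, rfl⟩
      exact hhalf t ht
    have hSzero : S = 0 := by linarith
    intro t ht
    rcases le_or_gt t c with h1 | h1
    · exact hzero t ⟨ht.1, h1⟩
    · have h2 : u t ≤ S := le_csSup hbdd (mem_image_of_mem _ ⟨h1.le, ht.2⟩)
      have h3 : 0 ≤ u t := hu0 t ⟨ht.1, ht.2.trans hdb⟩
      linarith
  -- induction: u = 0 on [a, min (a + n δ) b]
  have main : ∀ n : ℕ, ∀ t ∈ Set.Icc a (min (a + n * δ) b), u t = 0 := by
    intro n
    induction n with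
    | zero =>
      intro t ht
      have hmin : min (a + (0 : ℕ) * δ) b = a := by
        rw [Nat.cast_zero, zero_mul, add_zero, min_eq_left hab.le]
      rw [hmin] at ht
      have hta : t = a := le_antisymm ht.2 ht.1
      subst hta
      have h1 := hineq t ⟨le_refl t, hab.le⟩
      rw [intervalIntegral.integral_same, mul_zero] at h1
      exact le_antisymm h1 (hu0 t ⟨le_refl t, hab.le⟩)
    | succ n ih =>
      rcases le_or_gt b (a + n * δ) with hble | hblt
      · intro t ht
        apply ih
        rw [min_eq_right hble]
        exact ⟨ht.1, ht.2.trans (min_le_right _ _)⟩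
      · have hc : min (a + n * δ) b = a + n * δ := min_eq_left hblt.le
        have hz : ∀ s ∈ Set.Icc a (a + n * δ), u s = 0 := by
          intro s hs; apply ih; rw [hc]; exact hs
        have hstep := step (a + n * δ)
          (le_add_of_nonneg_right (by positivity)) hblt hz
        intro t ht
        apply hstep
        have he : a + ((n : ℝ) + 1) * δ = a + (n : ℝ) * δ + δ := by ring
        push_cast at ht
        rw [he] at ht
        exact ht
  obtain ⟨n, hn⟩ := exists_nat_ge ((b - a) / δ)
  have hba : b ≤ a + n * δ := by
    have := (div_le_iff₀ hδ0).mp hn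
    linarith
  intro t ht
  apply main n
  rw [min_eq_right hba]
  exact ht

/-- For `0 < α < 1`, `λ ≥ 1` and `h : [a,b] → [0,∞)` continuous:
every continuous nonnegative `u : [a,b] → [0,∞)` satisfying
`u(t) ≤ (1/Γ(α)) ∫_a^t (t-s)^{α-1} h(s) u(s)^λ ds` vanishes identically on `[a,b]`;
consequently `w(t,s) = h(t)·s^λ` is a Kamke function of order `α` on `[a,b]`. -/
theorem superlinear_with_coefficient_is_kamke
    (a b α lam : ℝ) (hab : a < b) (hα0 : 0 < α) (hα1 : α < 1) (hlam : 1 ≤ lam)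
    (h : ℝ → ℝ) (hh : ContinuousOn h (Set.Icc a b)) (hh0 : ∀ t ∈ Set.Icc a b, 0 ≤ h t) :
    (∀ u : ℝ → ℝ, ContinuousOn u (Set.Icc a b) → (∀ t ∈ Set.Icc a b, 0 ≤ u t) →
      (∀ t ∈ Set.Icc a b,
        u t ≤ (Real.Gamma α)⁻¹ * ∫ s in a..t, ((t - s) ^ (α - 1) : ℝ) * (h s * u s ^ lam)) →
      ∀ t ∈ Set.Icc a b, u t = 0) ∧
    IsKamkeFunction α a b (fun t s => h t * s ^ lam) := by
  constructor
  · intro u hu hu0 hineq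
    exact vanish a b α lam hab hα0 hα1 hlam h hh hh0 u hu hu0 hineq
  · refine ⟨?_, ?_, ?_, ?_⟩
    · exact (hh.comp continuous_fst.continuousOn (fun p hp => hp.1)).mul
        (((Real.continuous_rpow_const (by linarith)).comp continuous_snd).continuousOn)
    · intro t ht s hs
      exact mul_nonneg (hh0 t ht) (Real.rpow_nonneg hs _)
    · intro t ht
      simp [Real.zero_rpow (by linarith : lam ≠ 0)]
    · intro v hv hv0 hvineq _
      exact vanish a b α lam hab hα0 hα1 hlam h hh hh0 v hv hv0 hvineq
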